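/- Let F be a family of Borel functions f : ℝ^s → ℝ such that f∘Y is P-integrable for every f ∈ F. Assume: (i) the central subspace S_{Y|X} is itself a dimension reduction subspace; (ii) for each f ∈ F, the central mean subspace S_{E[f(Y)|X]} is itself a mean dimension reduction subspace for f; and (iii) for every subspace S of ℝ^p, if E[f(Y)|σ(X)] = E[f(Y)|σ(P_S∘X)] P-a.e. for all f ∈ F, then Y and X are conditionally independent given σ(P_S∘X). Then the central subspace S_{Y|X} is contained in span{ S_{E[f(Y)|X]} : f ∈ F } (the supremum of the central mean subspaces). (Lemma 1, part 2.) -/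

import Mathlib

open MeasureTheory ProbabilityTheory Filter

/-- The map `x ↦ P_S x`, the orthogonal projection onto `S` viewed as a map of the
ambient Euclidean space. -/
noncomputable def projFn {p : ℕ} (S : Submodule ℝ (EuclideanSpace ℝ (Fin p))) :
    EuclideanSpace ℝ (Fin p) → EuclideanSpace ℝ (Fin p) :=
  fun v => (S.orthogonalProjectionOnto v : EuclideanSpace ℝ (Fin p))

/-- The σ-algebra `σ(P_S ∘ X)` generated by the projected random vector. -/
noncomputable def sigmaProj {Ω : Type*} {p : ℕ}
    (S : Submodule ℝ (EuclideanSpace ℝ (Fin p))) (X : Ω → EuclideanSpace ℝ (Fin p)) :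
    MeasurableSpace Ω :=
  MeasurableSpace.comap (fun ω => projFn S (X ω)) inferInstance

lemma sigmaProj_le {Ω : Type*} {p : ℕ} [mΩ : MeasurableSpace Ω]
    (S : Submodule ℝ (EuclideanSpace ℝ (Fin p))) {X : Ω → EuclideanSpace ℝ (Fin p)}
    (hX : Measurable X) : sigmaProj S X ≤ mΩ := by
  have h : Measurable (fun ω => projFn S (X ω)) := by
    have : Measurable (projFn S) :=
      (S.subtypeL.comp (S.orthogonalProjectionOnto)).continuous.measurable
    exact this.comp hX
  exact h.comap_le

/-- `S` is a dimension reduction subspace: `Y ⫫ X | σ(P_S ∘ X)`. -/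
def IsDRS {Ω : Type*} {p s : ℕ} [mΩ : MeasurableSpace Ω] [StandardBorelSpace Ω]
    (P : Measure Ω) [IsFiniteMeasure P]
    (X : Ω → EuclideanSpace ℝ (Fin p)) (Y : Ω → EuclideanSpace ℝ (Fin s))
    (hX : Measurable X) (S : Submodule ℝ (EuclideanSpace ℝ (Fin p))) : Prop :=
  CondIndep (sigmaProj S X) (MeasurableSpace.comap Y inferInstance)
    (MeasurableSpace.comap X inferInstance) (sigmaProj_le S hX) P

/-- The central subspace `S_{Y|X}`: the intersection of all dimension reduction subspaces. -/
noncomputable def centralSubspace {Ω : Type*} {p s : ℕ} [mΩ : MeasurableSpace Ω]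
    [StandardBorelSpace Ω] (P : Measure Ω) [IsFiniteMeasure P]
    (X : Ω → EuclideanSpace ℝ (Fin p)) (Y : Ω → EuclideanSpace ℝ (Fin s))
    (hX : Measurable X) : Submodule ℝ (EuclideanSpace ℝ (Fin p)) :=
  sInf {S | IsDRS P X Y hX S}

/-- `S` is a mean dimension reduction subspace for `f`:
`E[f(Y) | σ(X)] = E[f(Y) | σ(P_S ∘ X)]` a.e. -/
def IsMeanDRS {Ω : Type*} {p s : ℕ} [mΩ : MeasurableSpace Ω] (P : Measure Ω)
    (X : Ω → EuclideanSpace ℝ (Fin p)) (Y : Ω → EuclideanSpace ℝ (Fin s))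
    (f : EuclideanSpace ℝ (Fin s) → ℝ) (S : Submodule ℝ (EuclideanSpace ℝ (Fin p))) : Prop :=
  P[(fun ω => f (Y ω))|MeasurableSpace.comap X inferInstance]
    =ᵐ[P] P[(fun ω => f (Y ω))|sigmaProj S X]

/-- The central mean subspace `S_{E[f(Y)|X]}`: the intersection of all mean dimension
reduction subspaces for `f`. -/
noncomputable def centralMeanSubspace {Ω : Type*} {p s : ℕ} [mΩ : MeasurableSpace Ω]
    (P : Measure Ω) (X : Ω → EuclideanSpace ℝ (Fin p)) (Y : Ω → EuclideanSpace ℝ (Fin s))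
    (f : EuclideanSpace ℝ (Fin s) → ℝ) : Submodule ℝ (EuclideanSpace ℝ (Fin p)) :=
  sInf {S | IsMeanDRS P X Y f S}

lemma sigmaProj_mono' {Ω : Type*} {p : ℕ}
    {S T : Submodule ℝ (EuclideanSpace ℝ (Fin p))} (h : S ≤ T)
    (X : Ω → EuclideanSpace ℝ (Fin p)) : sigmaProj S X ≤ sigmaProj T X := by
  have key : (fun ω => projFn S (X ω)) = projFn S ∘ (fun ω => projFn T (X ω)) := by
    funext ω
    simp only [Function.comp, projFn]
    rw [← Submodule.starProjection_apply T, Submodule.orthogonalProjectionOnto_starProjection_of_le h]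
  rw [sigmaProj, key, ← MeasurableSpace.comap_comp]
  exact MeasurableSpace.comap_mono
    ((S.subtypeL.comp (S.orthogonalProjectionOnto)).continuous.measurable.comap_le)

lemma sigmaProj_le_comap' {Ω : Type*} {p : ℕ}
    (S : Submodule ℝ (EuclideanSpace ℝ (Fin p))) (X : Ω → EuclideanSpace ℝ (Fin p)) :
    sigmaProj S X ≤ MeasurableSpace.comap X inferInstance := by
  have key : (fun ω => projFn S (X ω)) = projFn S ∘ X := rfl
  rw [sigmaProj, key, ← MeasurableSpace.comap_comp]
  exact MeasurableSpace.comap_mono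
    ((S.subtypeL.comp (S.orthogonalProjectionOnto)).continuous.measurable.comap_le)

/-- Lemma 1, part 2: if `E[f(Y)|σ(X)] = E[f(Y)|σ(P_S∘X)]` for all `f ∈ F` implies the
conditional independence of `Y` and `X` given `σ(P_S∘X)`, then the central subspace is
contained in the span of the central mean subspaces over `F`. -/
theorem centralSubspace_le_span_centralMeanSubspaces
    {Ω : Type*} {p s : ℕ} [mΩ : MeasurableSpace Ω] [StandardBorelSpace Ω]
    (P : Measure Ω) [IsProbabilityMeasure P]
    (X : Ω → EuclideanSpace ℝ (Fin p)) (Y : Ω → EuclideanSpace ℝ (Fin s))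
    (hX : Measurable X) (hY : Measurable Y)
    (F : Set (EuclideanSpace ℝ (Fin s) → ℝ))
    (hFmeas : ∀ f ∈ F, Measurable f)
    (hFint : ∀ f ∈ F, Integrable (fun ω => f (Y ω)) P)
    (hcentral : IsDRS P X Y hX (centralSubspace P X Y hX))
    (hmean : ∀ f ∈ F, IsMeanDRS P X Y f (centralMeanSubspace P X Y f))
    (himp : ∀ S : Submodule ℝ (EuclideanSpace ℝ (Fin p)),
      (∀ f ∈ F, P[(fun ω => f (Y ω))|MeasurableSpace.comap X inferInstance]
        =ᵐ[P] P[(fun ω => f (Y ω))|sigmaProj S X]) →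
      CondIndep (sigmaProj S X) (MeasurableSpace.comap Y inferInstance)
        (MeasurableSpace.comap X inferInstance) (sigmaProj_le S hX) P) :
    centralSubspace P X Y hX ≤ ⨆ f ∈ F, centralMeanSubspace P X Y f := by
  set T := ⨆ f ∈ F, centralMeanSubspace P X Y f with hT
  have hTdrs : IsDRS P X Y hX T := by
    apply himp
    intro f hf
    have hSle : centralMeanSubspace P X Y f ≤ T :=
      le_biSup (fun f => centralMeanSubspace P X Y f) hf
    set S := centralMeanSubspace P X Y f
    have h1 : P[(fun ω => f (Y ω))|MeasurableSpace.comap X inferInstance]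
        =ᵐ[P] P[(fun ω => f (Y ω))|sigmaProj S X] := hmean f hf
    have hST : sigmaProj S X ≤ sigmaProj T X := sigmaProj_mono' hSle X
    have hTX : sigmaProj T X ≤ MeasurableSpace.comap X inferInstance :=
      sigmaProj_le_comap' T X
    have hXm : MeasurableSpace.comap X inferInstance ≤ mΩ := hX.comap_le
    -- tower: E[E[fY|σX]|σ(P_T X)] = E[fY|σ(P_T X)]
    have tower : P[P[(fun ω => f (Y ω))|MeasurableSpace.comap X inferInstance]|sigmaProj T X]
        =ᵐ[P] P[(fun ω => f (Y ω))|sigmaProj T X] :=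
      condExp_condExp_of_le hTX hXm
    -- E[E[fY|σ(P_S X)]|σ(P_T X)] = E[fY|σ(P_S X)] since S-measurable
    have hsm : StronglyMeasurable[sigmaProj T X]
        (P[(fun ω => f (Y ω))|sigmaProj S X]) :=
      (stronglyMeasurable_condExp).mono hST
    have fixed : P[P[(fun ω => f (Y ω))|sigmaProj S X]|sigmaProj T X]
        = P[(fun ω => f (Y ω))|sigmaProj S X] :=
      condExp_of_stronglyMeasurable (sigmaProj_le T hX) hsm integrable_condExp
    have congr1 : P[P[(fun ω => f (Y ω))|MeasurableSpace.comap X inferInstance]|sigmaProj T X]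
        =ᵐ[P] P[P[(fun ω => f (Y ω))|sigmaProj S X]|sigmaProj T X] :=
      condExp_congr_ae h1
    calc P[(fun ω => f (Y ω))|MeasurableSpace.comap X inferInstance]
        =ᵐ[P] P[(fun ω => f (Y ω))|sigmaProj S X] := h1
      _ = P[P[(fun ω => f (Y ω))|sigmaProj S X]|sigmaProj T X] := fixed.symm
      _ =ᵐ[P] P[P[(fun ω => f (Y ω))|MeasurableSpace.comap X inferInstance]|sigmaProj T X] :=
          congr1.symm
      _ =ᵐ[P] P[(fun ω => f (Y ω))|sigmaProj T X] := tower
  exact sInf_le hTdrs
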